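/- For the regularized score matching objective E(δ) = ½ δ^⊤ Γ̂ δ + δ^⊤ v + λ(R(θ* + δ) − R(θ*)), where Γ̂ satisfies δ^⊤ Γ̂ δ ≥ (ε/2)‖δ‖² for all δ, R is a norm decomposable with respect to a subspace P̃ with compatibility constant √s (so R(u) ≤ √s ‖u‖ on P̃), θ* ∈ P̃, and λ ≥ 2R*(v), any δ̂ with E(δ̂) ≤ 0 satisfies ‖δ̂‖₂ ≤ (7λ/ε)√s. -/

import Mathlib

open scoped InnerProductSpace

/-- Estimation-error bound for regularized score matching: under restricted strong
convexity, decomposability and compatibility, any δ̂ with E(δ̂) ≤ 0 satisfies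
‖δ̂‖ ≤ (7λ/ε)√s. -/
theorem stmt18 {p : ℕ}
    (Γ : EuclideanSpace ℝ (Fin p) →ₗ[ℝ] EuclideanSpace ℝ (Fin p))
    (v θstar : EuclideanSpace ℝ (Fin p))
    (N : Seminorm ℝ (EuclideanSpace ℝ (Fin p)))
    (P : Submodule ℝ (EuclideanSpace ℝ (Fin p)))
    (ε s lam Rstar : ℝ) (hε : 0 < ε) (hs : 1 ≤ s) (hRstar : 0 ≤ Rstar)
    (hΓ : ∀ δ, ε / 2 * ‖δ‖ ^ 2 ≤ ⟪δ, Γ δ⟫_ℝ)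
    (hdual : ∀ δ, |⟪δ, v⟫_ℝ| ≤ N δ * Rstar)
    (hdecomp : ∀ a ∈ P, ∀ b ∈ Pᗮ, N (a + b) = N a + N b)
    (hcompat : ∀ u ∈ P, N u ≤ Real.sqrt s * ‖u‖)
    (hθstar : θstar ∈ P)
    (hlam : 2 * Rstar ≤ lam)
    (δhat : EuclideanSpace ℝ (Fin p))
    (hE : (1 / 2) * ⟪δhat, Γ δhat⟫_ℝ + ⟪δhat, v⟫_ℝ +
        lam * (N (θstar + δhat) - N θstar) ≤ 0) :
    ‖δhat‖ ≤ 7 * lam / ε * Real.sqrt s := by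

  have hlam0 : 0 ≤ lam := le_trans (by linarith) hlam
  have hsqrt : 0 ≤ Real.sqrt s := Real.sqrt_nonneg s
  set a : EuclideanSpace ℝ (Fin p) := (P.orthogonalProjectionOnto δhat : EuclideanSpace ℝ (Fin p)) with ha_def
  have ha : a ∈ P := (P.orthogonalProjectionOnto δhat).2
  have hb : δhat - a ∈ Pᗮ := P.sub_starProjection_mem_orthogonal δhat
  have hNa : ‖a‖ ≤ ‖δhat‖ := by
    have h1 := (P.orthogonalProjectionOnto).le_opNorm δhat
    have h2 : ‖P.orthogonalProjectionOnto‖ ≤ 1 := P.orthogonalProjectionOnto_norm_le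
    have : ‖(P.orthogonalProjectionOnto δhat : EuclideanSpace ℝ (Fin p))‖
        = ‖P.orthogonalProjectionOnto δhat‖ := rfl
    nlinarith [norm_nonneg δhat]
  -- key decompositions
  have hNδ : N δhat = N a + N (δhat - a) := by
    have := hdecomp a ha (δhat - a) hb
    simpa using this
  have hkey : N (δhat - a) - N a ≤ N (θstar + δhat) - N θstar := by
    have h1 : N (θstar + δhat) = N (θstar + a) + N (δhat - a) := by
      have := hdecomp (θstar + a) (P.add_mem hθstar ha) (δhat - a) hb
      rw [← this]
      congr 1
      abel
    have h2 : N θstar ≤ N (θstar + a) + N a := by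
      have := map_add_le_add N (θstar + a) (-a)
      simpa using this
    linarith
  -- inner product bound
  have hdv : -⟪δhat, v⟫_ℝ ≤ (N a + N (δhat - a)) * Rstar := by
    have h1 := hdual δhat
    have h2 : -⟪δhat, v⟫_ℝ ≤ |⟪δhat, v⟫_ℝ| := neg_le_abs _
    rw [hNδ] at h1
    linarith
  have hΓδ := hΓ δhat
  have hNa' : N a ≤ Real.sqrt s * ‖δhat‖ := by
    have := hcompat a ha
    nlinarith
  have hNb0 : 0 ≤ N (δhat - a) := apply_nonneg N _
  have hNa0 : 0 ≤ N a := apply_nonneg N _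
  -- main inequality: ε/4 ‖δ‖² ≤ (3 lam/2) √s ‖δ‖
  have hmain : ε / 4 * ‖δhat‖ ^ 2 ≤ 3 * lam / 2 * (Real.sqrt s * ‖δhat‖) := by
    nlinarith [mul_le_mul_of_nonneg_left hkey hlam0,
      mul_le_mul_of_nonneg_right hlam (hNb0.trans (by linarith : N (δhat - a) ≤ N a + N (δhat - a)))]
  rcases eq_or_lt_of_le (norm_nonneg δhat) with h0 | h0
  · rw [← h0]
    positivity
  · have h1 : ε * ‖δhat‖ ≤ 6 * lam * Real.sqrt s := by nlinarith
    rw [div_mul_eq_mul_div, le_div_iff₀ hε]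
    nlinarith [mul_nonneg hlam0 hsqrt]
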